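/- Let p be an odd prime and G a finite group with p-core V and W = V^p·[V,V]. Then G is tame-decoupled if and only if the quotient group G/W is tame-decoupled. -/

import Mathlib

open scoped Pointwise

/-- The `p`-core of `G`: the intersection of all Sylow `p`-subgroups. -/
def pCore (p : ℕ) (G : Type*) [Group G] : Subgroup G :=
  ⨅ P : Sylow p G, (P : Subgroup G)

instance pCore_normal (p : ℕ) (G : Type*) [Group G] : (pCore p G).Normal := by
  constructor
  intro x hx g
  rw [pCore, Subgroup.mem_iInf] at hx ⊢
  intro P
  have h := hx (g⁻¹ • P)
  rw [Sylow.coe_subgroup_smul, Subgroup.mem_pointwise_smul_iff_inv_smul_mem] at h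
  simpa [MulAut.conj] using h

/-- `W = V^p⋅[V,V]`, the Frattini subgroup of the `p`-core `V`, as a subgroup of `G`. -/
def pFrattini (p : ℕ) (G : Type*) [Group G] : Subgroup G :=
  Subgroup.closure ((fun v => v ^ p) '' (pCore p G : Set G)) ⊔ ⁅pCore p G, pCore p G⁆

instance pFrattini_normal (p : ℕ) (G : Type*) [Group G] : (pFrattini p G).Normal := by
  have h1 : (Subgroup.closure ((fun v => v ^ p) '' (pCore p G : Set G))).Normal := by
    constructor
    intro x hx g
    induction hx using Subgroup.closure_induction'' with
    | one => simpa using Subgroup.one_mem _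
    | mem y hy =>
        obtain ⟨v, hv, rfl⟩ := hy
        refine Subgroup.subset_closure ⟨g * v * g⁻¹, (pCore_normal p G).conj_mem v hv g, ?_⟩
        simp [conj_pow]
    | inv_mem y hy =>
        obtain ⟨v, hv, rfl⟩ := hy
        have : g * (v ^ p)⁻¹ * g⁻¹ = ((g * v * g⁻¹) ^ p)⁻¹ := by
          rw [conj_pow]; group
        rw [this]
        exact Subgroup.inv_mem _ (Subgroup.subset_closure
          ⟨g * v * g⁻¹, (pCore_normal p G).conj_mem v hv g, by simp [conj_pow]⟩)
    | mul y z _ _ hy hz =>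
        have : g * (y * z) * g⁻¹ = (g * y * g⁻¹) * (g * z * g⁻¹) := by group
        rw [this]
        exact Subgroup.mul_mem _ hy hz
  have h2 : (⁅pCore p G, pCore p G⁆ : Subgroup G).Normal := Subgroup.commutator_normal _ _
  exact Subgroup.sup_normal _ _

/-- Membership in `T_G`: the tame relation holds and the images of `σ, τ` generate `G/V`. -/
def MemTG (p : ℕ) {G : Type*} [Group G] (σ τ : G) : Prop :=
  σ⁻¹ * τ * σ = τ ^ p ∧ Subgroup.closure {σ, τ} ⊔ pCore p G = ⊤

/-- `G` is tame-decoupled if `τ` acts trivially on `V/W` for every `(σ,τ) ∈ T_G`. -/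
def IsTameDecoupled (p : ℕ) (G : Type*) [Group G] : Prop :=
  ∀ σ τ : G, MemTG p σ τ → ∀ v ∈ pCore p G, τ⁻¹ * v * τ * v⁻¹ ∈ pFrattini p G


set_option linter.unusedSectionVars false

universe u

section AuxCore
variable (p : ℕ) [Fact p.Prime] (G : Type*) [Group G] [Finite G]

lemma isPGroup_pCore : IsPGroup p (pCore p G) := by
  obtain ⟨P⟩ := (inferInstance : Nonempty (Sylow p G))
  exact P.isPGroup'.to_le (iInf_le _ P)

lemma le_pCore {N : Subgroup G} (hN : N.Normal) (hp : IsPGroup p N) : N ≤ pCore p G := by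
  obtain ⟨P, hP⟩ := hp.exists_le_sylow
  show N ≤ ⨅ Q : Sylow p G, (Q : Subgroup G)
  refine le_iInf fun Q => ?_
  obtain ⟨g, hg⟩ := MulAction.exists_smul_eq G P Q
  intro a ha
  have h2 : g⁻¹ * a * g ∈ P := hP (by simpa using hN.conj_mem a ha g⁻¹)
  rw [← hg, Sylow.coe_subgroup_smul, Subgroup.mem_pointwise_smul_iff_inv_smul_mem]
  have h3 : g⁻¹ * a * g ∈ (P : Subgroup G) := h2
  simpa [MulAut.conj] using h3

end AuxCore

lemma pFrattini_def (p : ℕ) (G : Type*) [Group G] : pFrattini p G =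
    Subgroup.closure ((fun v => v ^ p) '' (pCore p G : Set G)) ⊔ ⁅pCore p G, pCore p G⁆ := rfl

section AuxFrattini
variable (p : ℕ) [Fact p.Prime] (G : Type*) [Group G] [Finite G]

lemma pFrattini_le_pCore : pFrattini p G ≤ pCore p G := by
  rw [pFrattini_def]
  apply sup_le
  · rw [Subgroup.closure_le]
    rintro _ ⟨v, hv, rfl⟩
    exact (pCore p G).pow_mem hv p
  · exact Subgroup.commutator_le_left (pCore p G) (pCore p G)

lemma pow_mem_pFrattini {v : G} (hv : v ∈ pCore p G) : v ^ p ∈ pFrattini p G :=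
  Subgroup.mem_sup_left (Subgroup.subset_closure ⟨v, hv, rfl⟩)

open scoped commutatorElement in
lemma commutator_mem_pFrattini {v w : G} (hv : v ∈ pCore p G) (hw : w ∈ pCore p G) :
    ⁅v, w⁆ ∈ pFrattini p G :=
  Subgroup.mem_sup_right (Subgroup.commutator_mem_commutator hv hw)

lemma isPGroup_pFrattini : IsPGroup p (pFrattini p G) :=
  (isPGroup_pCore p G).to_le (pFrattini_le_pCore p G)

lemma pCore_quotient_eq :
    pCore p (G ⧸ pFrattini p G) = (pCore p G).map (QuotientGroup.mk' (pFrattini p G)) := by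
  apply le_antisymm
  · have hUn : ((pCore p (G ⧸ pFrattini p G)).comap
        (QuotientGroup.mk' (pFrattini p G))).Normal :=
      (pCore_normal p _).comap _
    have hUp : IsPGroup p ((pCore p (G ⧸ pFrattini p G)).comap
        (QuotientGroup.mk' (pFrattini p G))) := by
      intro g
      have hcorep := isPGroup_pCore p (G ⧸ pFrattini p G)
      obtain ⟨k, hk⟩ := hcorep ⟨QuotientGroup.mk' (pFrattini p G) (g : G),
        Subgroup.mem_comap.mp g.2⟩
      have hk' : QuotientGroup.mk' (pFrattini p G) ((g : G) ^ p ^ k) = 1 := by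
        have h := congrArg Subtype.val hk
        push_cast at h
        rw [map_pow]
        exact h
      have hWmem : (g : G) ^ p ^ k ∈ pFrattini p G := by
        rwa [← MonoidHom.mem_ker, QuotientGroup.ker_mk'] at hk'
      obtain ⟨l, hl⟩ := isPGroup_pFrattini p G ⟨_, hWmem⟩
      refine ⟨k + l, ?_⟩
      have h2 := congrArg Subtype.val hl
      push_cast at h2
      ext
      push_cast
      rw [pow_add, pow_mul]
      exact h2
    have hle := le_pCore p G hUn hUp
    calc pCore p (G ⧸ pFrattini p G)
        = ((pCore p (G ⧸ pFrattini p G)).comap (QuotientGroup.mk' (pFrattini p G))).map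
            (QuotientGroup.mk' (pFrattini p G)) :=
          (Subgroup.map_comap_eq_self_of_surjective (QuotientGroup.mk'_surjective _) _).symm
      _ ≤ (pCore p G).map (QuotientGroup.mk' (pFrattini p G)) := Subgroup.map_mono hle
  · exact le_pCore p _ ((pCore_normal p G).map _ (QuotientGroup.mk'_surjective _))
      ((isPGroup_pCore p G).map _)

lemma pFrattini_quotient_eq_bot : pFrattini p (G ⧸ pFrattini p G) = ⊥ := by
  have hcore := pCore_quotient_eq p G
  apply le_bot_iff.mp
  rw [pFrattini_def p (G ⧸ pFrattini p G)]
  apply sup_le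
  · rw [Subgroup.closure_le]
    rintro _ ⟨vb, hvb, rfl⟩
    have hvb' : vb ∈ pCore p (G ⧸ pFrattini p G) := hvb
    rw [hcore] at hvb'
    obtain ⟨v, hv, rfl⟩ := Subgroup.mem_map.mp hvb'
    have h1 : (QuotientGroup.mk' (pFrattini p G)) v ^ p = 1 := by
      rw [← map_pow, ← MonoidHom.mem_ker, QuotientGroup.ker_mk']
      exact pow_mem_pFrattini p G hv
    simpa [SetLike.mem_coe, Subgroup.mem_bot] using h1
  · rw [Subgroup.commutator_le]
    intro g1 h1 g2 h2
    rw [hcore] at h1 h2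
    obtain ⟨v, hv, rfl⟩ := Subgroup.mem_map.mp h1
    obtain ⟨w, hw, rfl⟩ := Subgroup.mem_map.mp h2
    rw [Subgroup.mem_bot, ← map_commutatorElement, ← MonoidHom.mem_ker, QuotientGroup.ker_mk']
    exact commutator_mem_pFrattini p G hv hw

end AuxFrattini


lemma abelian_step {p : ℕ} [Fact p.Prime] {G : Type*} [Group G] (Z : Subgroup G)
    (hZn : Z.Normal) (hcomm : ∀ a ∈ Z, ∀ b ∈ Z, a * b = b * a) (hZp : IsPGroup p Z)
    {n : ℕ} (hpn : ¬ p ∣ n) {x z : G} (hz : z ∈ Z)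
    (hxn : x ^ n = 1) (hxzn : (x * z) ^ n = 1) :
    ∃ u ∈ Z, u * x * u⁻¹ = x * z := by
  letI : CommGroup Z :=
    { (inferInstance : Group Z) with
      mul_comm := fun a b => Subtype.ext (hcomm a a.2 b b.2) }
  have hmem : ∀ (i : ℕ) (a : Z), (x ^ i)⁻¹ * (a : G) * x ^ i ∈ Z := fun i a => by
    simpa using hZn.conj_mem (a : G) a.2 (x ^ i)⁻¹
  let ψ : ℕ → Z →* Z := fun i =>
    { toFun := fun a => ⟨(x ^ i)⁻¹ * (a : G) * x ^ i, hmem i a⟩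
      map_one' := by ext; simp
      map_mul' := fun a b => by ext; show (x ^ i)⁻¹ * ((a : G) * b) * x ^ i = _; push_cast; group }
  have hψcoe : ∀ (i : ℕ) (a : Z), ((ψ i a : Z) : G) = (x ^ i)⁻¹ * (a : G) * x ^ i :=
    fun i a => rfl
  have hψ0 : ∀ a : Z, ψ 0 a = a := fun a => by ext; rw [hψcoe]; simp
  have hψsucc : ∀ (i : ℕ) (a : Z), ψ (i + 1) a = ψ 1 (ψ i a) := fun i a => by
    ext; rw [hψcoe, hψcoe, hψcoe, pow_succ, pow_one]; group
  have hψn : ∀ a : Z, ψ n a = a := fun a => by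
    ext; rw [hψcoe, hxn]; group
  set zZ : Z := ⟨z, hz⟩ with hzZdef
  have hexp : ∀ k : ℕ, (x * z) ^ k = x ^ k * ((∏ i ∈ Finset.range k, ψ i zZ : Z) : G) := by
    intro k
    induction k with
    | zero => simp
    | succ k ih =>
      have key : ((∏ i ∈ Finset.range k, ψ i zZ : Z) : G) * x
          = x * ((ψ 1 (∏ i ∈ Finset.range k, ψ i zZ) : Z) : G) := by
        rw [hψcoe, pow_one]; group
      have hψ1P : ψ 1 (∏ i ∈ Finset.range k, ψ i zZ)
          = ∏ i ∈ Finset.range k, ψ (i + 1) zZ := by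
        rw [map_prod]
        exact Finset.prod_congr rfl fun i _ => (hψsucc i zZ).symm
      have hprod : (∏ i ∈ Finset.range (k + 1), ψ i zZ)
          = ψ 1 (∏ i ∈ Finset.range k, ψ i zZ) * zZ := by
        rw [Finset.prod_range_succ', hψ1P, hψ0]
      calc (x * z) ^ (k + 1) = (x * z) ^ k * (x * z) := by rw [pow_succ]
        _ = x ^ k * ((∏ i ∈ Finset.range k, ψ i zZ : Z) : G) * (x * z) := by rw [ih]
        _ = x ^ k * (((∏ i ∈ Finset.range k, ψ i zZ : Z) : G) * x) * z := by group
        _ = x ^ k * (x * ((ψ 1 (∏ i ∈ Finset.range k, ψ i zZ) : Z) : G)) * z := by rw [key]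
        _ = x ^ (k + 1) * (((ψ 1 (∏ i ∈ Finset.range k, ψ i zZ) : Z) : G) * z) := by
            rw [pow_succ]; group
        _ = x ^ (k + 1) * ((ψ 1 (∏ i ∈ Finset.range k, ψ i zZ) * zZ : Z) : G) := by
            push_cast; rfl
        _ = x ^ (k + 1) * ((∏ i ∈ Finset.range (k + 1), ψ i zZ : Z) : G) := by rw [hprod]
  have hN : (∏ i ∈ Finset.range n, ψ i zZ) = 1 := by
    have h := hexp n
    rw [hxzn, hxn, one_mul] at h
    exact Subtype.ext h.symm
  set f : ℕ → Z := fun j => (ψ j zZ) ^ j with hf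
  set w : Z := ∏ i ∈ Finset.range n, (ψ i zZ) ^ (i + 1) with hw
  have hw' : w = ∏ j ∈ Finset.range n, f j := by
    rw [hw]
    have h1 : ∀ i ∈ Finset.range n, (ψ i zZ) ^ (i + 1) = f i * ψ i zZ := fun i _ => by
      rw [hf]; rw [pow_succ]
    rw [Finset.prod_congr rfl h1, Finset.prod_mul_distrib, hN, mul_one]
  have htel : ψ 1 w = w * zZ ^ n := by
    have h1 : ψ 1 w = ∏ i ∈ Finset.range n, f (i + 1) := by
      rw [hw, map_prod]
      exact Finset.prod_congr rfl fun i _ => by rw [map_pow, ← hψsucc]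
    have h2 : ∏ i ∈ Finset.range n, f (i + 1) = ∏ j ∈ Finset.range (n + 1), f j := by
      rw [Finset.prod_range_succ']
      simp [hf, hψ0]
    rw [h1, h2, Finset.prod_range_succ, ← hw']
    congr 1
    show (ψ n) zZ ^ n = zZ ^ n
    rw [hψn]
  obtain ⟨k, hk⟩ := hZp zZ
  have hord : orderOf zZ ∣ p ^ k := orderOf_dvd_of_pow_eq_one hk
  have hcop : n.Coprime (orderOf zZ) :=
    Nat.Coprime.coprime_dvd_right hord
      (Nat.Coprime.pow_right k ((Nat.Prime.coprime_iff_not_dvd Fact.out).mpr hpn).symm)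
  obtain ⟨m, hm⟩ := exists_pow_eq_self_of_coprime hcop
  refine ⟨((w ^ m : Z) : G), (w ^ m : Z).2, ?_⟩
  have hu : ψ 1 (w ^ m) * (w ^ m)⁻¹ = zZ := by
    rw [map_pow, htel, mul_pow, mul_comm (w ^ m), mul_assoc, mul_inv_cancel, mul_one, hm]
  have hcoe : x⁻¹ * ((w ^ m : Z) : G) * x * ((w ^ m : Z) : G)⁻¹ = z := by
    have h := congrArg (Subtype.val) hu
    push_cast at h
    rw [hψcoe, pow_one] at h
    simpa [mul_assoc] using h
  calc ((w ^ m : Z) : G) * x * ((w ^ m : Z) : G)⁻¹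
      = x * (x⁻¹ * ((w ^ m : Z) : G) * x * ((w ^ m : Z) : G)⁻¹) := by group
    _ = x * z := by rw [hcoe]

lemma conj_lift {p : ℕ} [Fact p.Prime] :
    ∀ (c : ℕ) (G : Type u) [Group G] [Finite G] (W : Subgroup G), W.Normal →
      Nat.card W ≤ c → IsPGroup p W → ∀ (n : ℕ), ¬ p ∣ n →
      ∀ x y : G, x⁻¹ * y ∈ W → x ^ n = 1 → y ^ n = 1 →
      ∃ u ∈ W, u * x * u⁻¹ = y := by
  intro c
  induction c with
  | zero =>
    intro G _ _ W _ hcard _ _ _ _ _ _ _ _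
    have := Nat.card_pos (α := W)
    omega
  | succ c ih =>
    intro G _ _ W hWn hcard hWp n hpn x y hxy hxn hyn
    by_cases hbot : W = ⊥
    · subst hbot
      have h1 : x⁻¹ * y = 1 := Subgroup.mem_bot.mp hxy
      have h2 : y = x := by
        have := congrArg (x * ·) h1
        simpa [mul_assoc] using this
      exact ⟨1, Subgroup.one_mem _, by simp [h2]⟩
    · haveI hWnontriv : Nontrivial W := (Subgroup.nontrivial_iff_ne_bot W).mpr hbot
      haveI := hWp.center_nontrivial
      obtain ⟨z', hz'⟩ := exists_ne (1 : Subgroup.center W)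
      set z : G := ((z' : W) : G) with hzdef
      have hzW : z ∈ W := (z' : W).2
      have hzne : z ≠ 1 := by
        intro h
        apply hz'
        ext
        exact h
      have hzc : z ∈ Subgroup.centralizer (W : Set G) := by
        rw [Subgroup.mem_centralizer_iff]
        intro h hh
        have hz2 := z'.2
        rw [Subgroup.mem_center_iff] at hz2
        have h2 := hz2 ⟨h, hh⟩
        exact congrArg Subtype.val h2
      set Z := Subgroup.centralizer (W : Set G) ⊓ W with hZdef
      have hZle : Z ≤ W := inf_le_right
      have hZn : Z.Normal := by
        constructor
        intro a ha g
        obtain ⟨hac, haW⟩ := Subgroup.mem_inf.mp ha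
        refine Subgroup.mem_inf.mpr ⟨?_, hWn.conj_mem a haW g⟩
        rw [Subgroup.mem_centralizer_iff] at hac ⊢
        intro h hh
        have hh' : g⁻¹ * h * g ∈ W := by simpa using hWn.conj_mem h hh g⁻¹
        have hcomm := hac _ hh'
        calc h * (g * a * g⁻¹) = g * ((g⁻¹ * h * g) * a) * g⁻¹ := by group
          _ = g * (a * (g⁻¹ * h * g)) * g⁻¹ := by rw [hcomm]
          _ = g * a * g⁻¹ * h := by group
      have hZp : IsPGroup p Z := hWp.to_le hZle
      have hzZ : z ∈ Z := ⟨hzc, hzW⟩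
      have hφsurj := QuotientGroup.mk'_surjective Z
      have hkerφ : (QuotientGroup.mk' Z).ker = Z := QuotientGroup.ker_mk' Z
      set φ := QuotientGroup.mk' Z with hφdef
      set W' := W.map φ with hW'def
      have hW'n : W'.Normal := hWn.map φ hφsurj
      have hW'p : IsPGroup p W' := hWp.map φ
      have hcard' : Nat.card W' ≤ c := by
        have hsurj : Function.Surjective
            (fun a : W => (⟨φ a, Subgroup.mem_map_of_mem φ a.2⟩ : W')) := by
          rintro ⟨w', hw'⟩
          obtain ⟨w, hw, rfl⟩ := Subgroup.mem_map.mp hw'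
          exact ⟨⟨w, hw⟩, rfl⟩
        have hle : Nat.card W' ≤ Nat.card W := Nat.card_le_card_of_surjective _ hsurj
        have hne : Nat.card W' ≠ Nat.card W := by
          intro heq
          have hbij := (Nat.bijective_iff_surjective_and_card _).mpr ⟨hsurj, heq.symm⟩
          have h1 : (⟨z, hzW⟩ : W) = 1 := by
            apply hbij.injective
            ext
            show φ z = φ 1
            rw [map_one]
            rw [← MonoidHom.mem_ker, hkerφ]
            exact hzZ
          exact hzne (congrArg Subtype.val h1)
        omega
      obtain ⟨u', hu'W', hu'⟩ := ih (G ⧸ Z) W' hW'n hcard' hW'p n hpn (φ x) (φ y)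
        (by rw [← map_inv, ← map_mul]; exact Subgroup.mem_map_of_mem φ hxy)
        (by rw [← map_pow, hxn, map_one])
        (by rw [← map_pow, hyn, map_one])
      obtain ⟨u₁, hu₁W, rfl⟩ := Subgroup.mem_map.mp hu'W'
      set x' := u₁ * x * u₁⁻¹ with hx'def
      have hφx' : φ x' = φ y := by
        rw [hx'def, map_mul, map_mul, map_inv]
        exact hu'
      have hx'z : x'⁻¹ * y ∈ Z := by
        rw [← hkerφ, MonoidHom.mem_ker, map_mul, map_inv, hφx']
        group
      have hy : y = x' * (x'⁻¹ * y) := by group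
      have hx'n : x' ^ n = 1 := by rw [hx'def, conj_pow, hxn, mul_one, mul_inv_cancel]
      have hx'zn : (x' * (x'⁻¹ * y)) ^ n = 1 := by rw [← hy]; exact hyn
      have hZcomm : ∀ a ∈ Z, ∀ b ∈ Z, a * b = b * a := fun a ha b hb =>
        (Subgroup.mem_centralizer_iff.mp (Subgroup.mem_inf.mp ha).1 b (hZle hb)).symm
      obtain ⟨u₂, hu₂Z, hu₂⟩ := abelian_step Z hZn hZcomm hZp hpn hx'z hx'n hx'zn
      refine ⟨u₂ * u₁, W.mul_mem (hZle hu₂Z) hu₁W, ?_⟩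
      have hstep : u₂ * u₁ * x * (u₂ * u₁)⁻¹ = u₂ * x' * u₂⁻¹ := by
        rw [hx'def]; group
      rw [hstep, hu₂, ← hy]

/-- `G` is tame-decoupled if and only if `G/W` is tame-decoupled. -/
theorem tameDecoupled_iff_quotient (p : ℕ) [Fact p.Prime] (hodd : Odd p)
    (G : Type*) [Group G] [Finite G] :
    IsTameDecoupled p G ↔ IsTameDecoupled p (G ⧸ pFrattini p G) := by
  constructor
  · -- G tame-decoupled → quotient tame-decoupled
    intro hTD σb τb hmem vb hvb
    obtain ⟨hrel, hgen⟩ := hmem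
    obtain ⟨σ₀, rfl⟩ := QuotientGroup.mk'_surjective (pFrattini p G) σb
    obtain ⟨τ₀, rfl⟩ := QuotientGroup.mk'_surjective (pFrattini p G) τb
    have hker := QuotientGroup.ker_mk' (pFrattini p G)
    set π := QuotientGroup.mk' (pFrattini p G) with hπdef
    -- n = order of τ̄, coprime to p
    set n := orderOf (π τ₀) with hndef
    have hnpos : 0 < n := orderOf_pos _
    have hpn : ¬ p ∣ n := by
      intro hdvd
      have hsc : SemiconjBy (π σ₀)⁻¹ (π τ₀) (π τ₀ ^ p) := by
        rw [SemiconjBy, ← hrel]; group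
      have hord := SemiconjBy.orderOf_eq _ hsc
      rw [orderOf_pow, Nat.gcd_eq_right hdvd] at hord
      rw [← hndef] at hord
      have hplt : 1 < p := (Fact.out : p.Prime).one_lt
      have := Nat.div_lt_self hnpos hplt
      omega
    -- dynamics F
    set F : G → G := fun g => σ₀ * g ^ p * σ₀⁻¹ with hFdef
    have hiter : ∀ (k : ℕ) (g : G), F^[k] g = σ₀ ^ k * g ^ p ^ k * (σ₀ ^ k)⁻¹ := by
      intro k
      induction k with
      | zero => intro g; simp
      | succ k ih =>
        intro g
        rw [Function.iterate_succ_apply', ih, hFdef]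
        show σ₀ * (σ₀ ^ k * g ^ p ^ k * (σ₀ ^ k)⁻¹) ^ p * σ₀⁻¹ = _
        rw [conj_pow, ← pow_mul, ← pow_succ, pow_succ σ₀ k]
        group
    have himg : ∀ k : ℕ, π (F^[k] τ₀) = π τ₀ := by
      intro k
      induction k with
      | zero => rfl
      | succ k ih =>
        rw [Function.iterate_succ_apply', hFdef]
        show π (σ₀ * F^[k] τ₀ ^ p * σ₀⁻¹) = _
        rw [map_mul, map_mul, map_inv, map_pow, ih, ← hrel]
        group
    obtain ⟨i, j, hij, heq⟩ :=
      Finite.exists_ne_map_eq_of_infinite (fun k : ℕ => F^[k] τ₀)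
    have hcycle : ∃ (x : G) (m : ℕ), 0 < m ∧ F^[m] x = x ∧ π x = π τ₀ := by
      rcases hij.lt_or_gt with h | h
      · refine ⟨F^[i] τ₀, j - i, by omega, ?_, himg i⟩
        rw [← Function.iterate_add_apply]
        have : j - i + i = j := by omega
        rw [this]
        exact heq.symm
      · refine ⟨F^[j] τ₀, i - j, by omega, ?_, himg j⟩
        rw [← Function.iterate_add_apply]
        have : i - j + j = i := by omega
        rw [this]
        exact heq
    obtain ⟨x, m, hm, hfix, hx⟩ := hcycle
    have hconj : x = σ₀ ^ m * x ^ p ^ m * (σ₀ ^ m)⁻¹ := by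
      rw [← hiter]; exact hfix.symm
    have hordx : Nat.gcd (orderOf x) (p ^ m) = 1 := by
      have hsc : SemiconjBy (σ₀ ^ m) (x ^ p ^ m) x := by
        rw [SemiconjBy]
        conv_rhs => rw [hconj]
        group
      have hord := SemiconjBy.orderOf_eq _ hsc
      rw [orderOf_pow] at hord
      rcases Nat.div_eq_self.mp hord with h | h
      · exact absurd h (orderOf_pos x).ne'
      · exact h
    have hxpn : ¬ p ∣ orderOf x := by
      intro hd
      have h1 : p ∣ Nat.gcd (orderOf x) (p ^ m) := Nat.dvd_gcd hd (dvd_pow_self p hm.ne')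
      rw [hordx] at h1
      have := (Fact.out : p.Prime).two_le
      have := Nat.le_of_dvd one_pos h1
      omega
    have hxnW : x ^ n ∈ pFrattini p G := by
      rw [← hker, MonoidHom.mem_ker, map_pow, hx]
      exact pow_orderOf_eq_one _
    have hxn : x ^ n = 1 := by
      obtain ⟨k, hk⟩ := isPGroup_pFrattini p G ⟨_, hxnW⟩
      have hk' := congrArg Subtype.val hk
      push_cast at hk'
      have h1 : orderOf (x ^ n) ∣ p ^ k := orderOf_dvd_of_pow_eq_one hk'
      have h2 : orderOf (x ^ n) ∣ orderOf x := orderOf_dvd_of_pow_eq_one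
        (by rw [← pow_mul, mul_comm, pow_mul, pow_orderOf_eq_one, one_pow])
      have hcop : Nat.Coprime (orderOf x) (p ^ k) :=
        Nat.Coprime.pow_right k ((Nat.Prime.coprime_iff_not_dvd Fact.out).mpr hxpn).symm
      exact orderOf_eq_one_iff.mp (Nat.dvd_one.mp (hcop ▸ Nat.dvd_gcd h2 h1))
    -- y and the conjugating element
    set y := σ₀ * x ^ p * σ₀⁻¹ with hydef
    have hπy : π y = π τ₀ := by
      rw [hydef, map_mul, map_mul, map_inv, map_pow, hx, ← hrel]
      group
    have hxyW : x⁻¹ * y ∈ pFrattini p G := by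
      rw [← hker, MonoidHom.mem_ker, map_mul, map_inv, hπy, hx]
      group
    have hyn : y ^ n = 1 := by
      rw [hydef, conj_pow, ← pow_mul, mul_comm p n, pow_mul, hxn, one_pow, mul_one,
        mul_inv_cancel]
    obtain ⟨u, huW, hu⟩ := conj_lift (Nat.card (pFrattini p G)) G (pFrattini p G)
      (pFrattini_normal p G) le_rfl (isPGroup_pFrattini p G) n hpn x y hxyW hxn hyn
    set σ := u⁻¹ * σ₀ with hσdef
    have hπu : π u = 1 := by
      rw [← MonoidHom.mem_ker, hker]; exact huW
    have hπσ : π σ = π σ₀ := by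
      rw [hσdef, map_mul, map_inv, hπu]; group
    have hrelG : σ⁻¹ * x * σ = x ^ p := by
      calc (u⁻¹ * σ₀)⁻¹ * x * (u⁻¹ * σ₀) = σ₀⁻¹ * (u * x * u⁻¹) * σ₀ := by group
        _ = σ₀⁻¹ * y * σ₀ := by rw [hu]
        _ = x ^ p := by rw [hydef]; group
    have hgenG : Subgroup.closure {σ, x} ⊔ pCore p G = ⊤ := by
      have hmap : (Subgroup.closure {σ, x} ⊔ pCore p G).map π = ⊤ := by
        rw [Subgroup.map_sup, MonoidHom.map_closure, Set.image_pair, hπσ, hx,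
          ← pCore_quotient_eq]
        exact hgen
      have hkle : π.ker ≤ Subgroup.closure {σ, x} ⊔ pCore p G := by
        rw [hker]
        exact le_trans (pFrattini_le_pCore p G) le_sup_right
      calc Subgroup.closure {σ, x} ⊔ pCore p G
          = Subgroup.closure {σ, x} ⊔ pCore p G ⊔ π.ker := (sup_eq_left.mpr hkle).symm
        _ = ((Subgroup.closure {σ, x} ⊔ pCore p G).map π).comap π :=
            (Subgroup.comap_map_eq π _).symm
        _ = (⊤ : Subgroup (G ⧸ pFrattini p G)).comap π := by rw [hmap]
        _ = ⊤ := Subgroup.comap_top π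
    have hvb' : vb ∈ (pCore p G).map π := by
      rw [← pCore_quotient_eq]; exact hvb
    obtain ⟨v, hv, rfl⟩ := Subgroup.mem_map.mp hvb'
    have hfin := hTD σ x ⟨hrelG, hgenG⟩ v hv
    have hone : π (x⁻¹ * v * x * v⁻¹) = 1 := by
      rw [← MonoidHom.mem_ker, hker]; exact hfin
    have hgoal : (π τ₀)⁻¹ * π v * π τ₀ * (π v)⁻¹ = 1 := by
      rw [← hx, ← map_inv, ← map_mul, ← map_mul, ← map_inv π v, ← map_mul]
      exact hone
    rw [hgoal]
    exact Subgroup.one_mem _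
  · -- quotient tame-decoupled → G tame-decoupled
    intro hTD σ τ hmem v hv
    have hker := QuotientGroup.ker_mk' (pFrattini p G)
    set π := QuotientGroup.mk' (pFrattini p G) with hπdef
    have h1 : MemTG p (π σ) (π τ) := by
      constructor
      · rw [← map_inv, ← map_mul, ← map_mul, hmem.1, map_pow]
      · have hmap : (Subgroup.closure {σ, τ} ⊔ pCore p G).map π = ⊤ := by
          rw [hmem.2]
          exact Subgroup.map_top_of_surjective π (QuotientGroup.mk'_surjective _)
        rw [Subgroup.map_sup, MonoidHom.map_closure, Set.image_pair,
          ← pCore_quotient_eq] at hmap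
        exact hmap
    have hvq : π v ∈ pCore p (G ⧸ pFrattini p G) := by
      rw [pCore_quotient_eq]
      exact Subgroup.mem_map_of_mem π hv
    have h2 := hTD (π σ) (π τ) h1 (π v) hvq
    rw [pFrattini_quotient_eq_bot, Subgroup.mem_bot] at h2
    have h3 : π (τ⁻¹ * v * τ * v⁻¹) = 1 := by
      rw [map_mul, map_mul, map_mul, map_inv, map_inv]
      exact h2
    rw [← hker, MonoidHom.mem_ker] at *
    exact h3
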